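/- Let L be the link of an edge in a 12-vertex 6-dimensional weak pseudomanifold with complementarity (given each edge is in 42 facets and each vertex in 77 facets). Then L is a 10-vertex 2-neighbourly 4-dimensional weak pseudomanifold with f-vector (10, 45, 100, 105, 42) and Euler characteristic 2. -/

import Mathlib

open Finset

/-- `K` is an (abstract) simplicial complex: faces are nonempty finite sets,
closed under passing to nonempty subsets. -/
def IsComplex {V : Type} [DecidableEq V] (K : Finset (Finset V)) : Prop :=
  (∀ σ ∈ K, σ.Nonempty) ∧ ∀ σ ∈ K, ∀ τ ⊆ σ, τ.Nonempty → τ ∈ K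

/-- `K` is pure of dimension `d`: every face has at most `d+1` vertices and is
contained in a face with exactly `d+1` vertices (a facet). -/
def IsPure {V : Type} [DecidableEq V] (d : ℕ) (K : Finset (Finset V)) : Prop :=
  (∀ σ ∈ K, σ.card ≤ d + 1) ∧ ∀ σ ∈ K, ∃ γ ∈ K, σ ⊆ γ ∧ γ.card = d + 1

/-- `K` is a `d`-dimensional weak pseudomanifold: a pure `d`-dimensional simplicial
complex (with at least one facet) in which every `(d-1)`-face (i.e. `d`-element face)
is contained in exactly two facets. -/
def IsWPM {V : Type} [DecidableEq V] (d : ℕ) (K : Finset (Finset V)) : Prop :=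
  IsComplex K ∧ IsPure d K ∧ (∃ σ ∈ K, σ.card = d + 1) ∧
    ∀ σ ∈ K, σ.card = d → (K.filter fun γ => γ.card = d + 1 ∧ σ ⊆ γ).card = 2

/-- Complementarity: exactly one of each complementary pair of nonempty subsets
of the vertex set is a face. -/
def Complementarity {V : Type} [DecidableEq V] [Fintype V] (K : Finset (Finset V)) : Prop :=
  ∀ A : Finset V, A.Nonempty → Aᶜ.Nonempty → (A ∈ K ↔ Aᶜ ∉ K)

/-- The link of `σ` in `K`: all faces `τ` disjoint from `σ` with `σ ∪ τ` a face. -/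
def lk {V : Type} [DecidableEq V] (K : Finset (Finset V)) (σ : Finset V) :
    Finset (Finset V) :=
  K.filter fun τ => σ ∩ τ = ∅ ∧ σ ∪ τ ∈ K

/-- The vertex set of a simplicial complex. -/
def vertSet {V : Type} [DecidableEq V] [Fintype V] (K : Finset (Finset V)) : Finset V :=
  Finset.univ.filter fun v => ({v} : Finset V) ∈ K

/-- Euler characteristic of a simplicial complex. -/
def eulerChar {V : Type} [DecidableEq V] (K : Finset (Finset V)) : ℤ :=
  ∑ σ ∈ K, (-1 : ℤ) ^ (σ.card - 1)

/-- A simplicial complex is connected if any two of its vertices are joined by a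
path of edges. -/
def ComplexConnected {V : Type} [DecidableEq V] [Fintype V] (L : Finset (Finset V)) : Prop :=
  ∀ u ∈ vertSet L, ∀ v ∈ vertSet L,
    Relation.ReflTransGen (fun a b : V => ({a, b} : Finset V) ∈ L) u v

/-- `L` is a circle (cycle complex): a connected 1-dimensional simplicial complex in
which every vertex lies in exactly two edges. -/
def IsCycle {V : Type} [DecidableEq V] [Fintype V] (L : Finset (Finset V)) : Prop :=
  IsComplex L ∧ (∀ σ ∈ L, σ.card ≤ 2) ∧ (∃ σ ∈ L, σ.card = 2) ∧
    (∀ v ∈ vertSet L, (L.filter fun e => e.card = 2 ∧ v ∈ e).card = 2) ∧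
    ComplexConnected L

/-- `L` is a closed combinatorial 2-manifold: a 2-dimensional simplicial complex in
which the link of every vertex is a circle. -/
def IsClosed2Mfd {V : Type} [DecidableEq V] [Fintype V] (L : Finset (Finset V)) : Prop :=
  IsComplex L ∧ (∀ σ ∈ L, σ.card ≤ 3) ∧ (∃ σ ∈ L, σ.card = 3) ∧
    ∀ v ∈ vertSet L, IsCycle (lk L {v})

/-- `L` is a combinatorial 2-sphere: a connected closed combinatorial 2-manifold of
Euler characteristic 2. -/
def Is2Sphere {V : Type} [DecidableEq V] [Fintype V] (L : Finset (Finset V)) : Prop :=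
  IsClosed2Mfd L ∧ ComplexConnected L ∧ eulerChar L = 2

/-- The degree of a face: the number of vertices of its link. -/
def degFace {V : Type} [DecidableEq V] [Fintype V] (K : Finset (Finset V))
    (σ : Finset V) : ℕ :=
  (vertSet (lk K σ)).card


section AuxStmt18

variable {M : Finset (Finset (Fin 12))} {e : Finset (Fin 12)}

lemma aux18_mem_lk {τ : Finset (Fin 12)} :
    τ ∈ lk M e ↔ τ ∈ M ∧ e ∩ τ = ∅ ∧ e ∪ τ ∈ M := by
  simp [lk, Finset.mem_filter, and_assoc]

lemma aux18_subset_compl {τ : Finset (Fin 12)} : τ ⊆ eᶜ ↔ e ∩ τ = ∅ := by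
  simp only [Finset.subset_iff, Finset.mem_compl,
    Finset.eq_empty_iff_forall_notMem, Finset.mem_inter, not_and]
  tauto

lemma aux18_compl_union {τ : Finset (Fin 12)} : (e ∪ τ)ᶜ = eᶜ \ τ := by
  ext x
  simp [not_or]

lemma aux18_neigh (hM : IsWPM 6 M) (hcomp : Complementarity M)
    {A : Finset (Fin 12)} (h1 : A.Nonempty) (h4 : A.card ≤ 4) : A ∈ M := by
  have hA1 : 1 ≤ A.card := Finset.card_pos.mpr h1
  have hcA : Aᶜ.card = 12 - A.card := by
    rw [Finset.card_compl, Fintype.card_fin]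
  have hAc : Aᶜ.Nonempty := by rw [← Finset.card_pos]; omega
  refine (hcomp A h1 hAc).mpr fun hc => ?_
  have := hM.2.1.1 Aᶜ hc
  omega

lemma aux18_facets (hM : IsWPM 6 M)
    (hvx : ∀ v : Fin 12, (M.filter fun γ => γ.card = 7 ∧ v ∈ γ).card = 77) :
    (M.filter fun γ => γ.card = 7).card = 132 := by
  classical
  set F := M.filter fun γ => γ.card = 7 with hF
  have h1 : ∀ v : Fin 12, (F.filter fun γ => v ∈ γ).card = 77 := by
    intro v; rw [hF, Finset.filter_filter]; exact hvx v
  have h2 : ∑ v : Fin 12, (F.filter fun γ => v ∈ γ).card = 924 := by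
    simp [h1]
  have h3 : ∑ v : Fin 12, (F.filter fun γ => v ∈ γ).card = ∑ γ ∈ F, γ.card := by
    simp only [Finset.card_filter]
    rw [Finset.sum_comm]
    refine Finset.sum_congr rfl fun γ _ => ?_
    simp [Finset.sum_ite_mem]
  have h4 : ∑ γ ∈ F, γ.card = 7 * F.card := by
    rw [Finset.sum_congr rfl (fun γ hγ => (Finset.mem_filter.mp hγ).2),
      Finset.sum_const, smul_eq_mul, mul_comm]
  omega

lemma aux18_disj20 (hM : IsWPM 6 M)
    (hedge : ∀ e ∈ M, e.card = 2 → (M.filter fun γ => γ.card = 7 ∧ e ⊆ γ).card = 42)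
    (hvx : ∀ v : Fin 12, (M.filter fun γ => γ.card = 7 ∧ v ∈ γ).card = 77)
    (he : e ∈ M) (hecard : e.card = 2) :
    (M.filter fun γ => γ.card = 7 ∧ e ∩ γ = ∅).card = 20 := by
  classical
  have h42 : (M.filter fun γ => γ.card = 7 ∧ e ⊆ γ).card = 42 := hedge e he hecard
  obtain ⟨u, v, huv, rfl⟩ := Finset.card_eq_two.mp hecard
  set F := M.filter fun γ => γ.card = 7 with hF
  have hFc : F.card = 132 := aux18_facets hM hvx
  have hu : (F.filter fun γ => u ∈ γ).card = 77 := by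
    rw [hF, Finset.filter_filter]; exact hvx u
  have hv : (F.filter fun γ => v ∈ γ).card = 77 := by
    rw [hF, Finset.filter_filter]; exact hvx v
  have hABi : (F.filter fun γ => u ∈ γ) ∩ (F.filter fun γ => v ∈ γ)
      = F.filter fun γ => ({u, v} : Finset (Fin 12)) ⊆ γ := by
    rw [← Finset.filter_and]
    apply Finset.filter_congr
    intro γ _
    simp [Finset.insert_subset_iff]
  have h42' : (F.filter fun γ => ({u, v} : Finset (Fin 12)) ⊆ γ).card = 42 := by
    rw [hF, Finset.filter_filter]; exact h42
  have hABu : (F.filter fun γ => u ∈ γ) ∪ (F.filter fun γ => v ∈ γ)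
      = F.filter fun γ => u ∈ γ ∨ v ∈ γ := (Finset.filter_or _ _ _).symm
  have hunion : (F.filter fun γ => u ∈ γ ∨ v ∈ γ).card = 112 := by
    have hh := Finset.card_union_add_card_inter (F.filter fun γ => u ∈ γ)
      (F.filter fun γ => v ∈ γ)
    rw [hABu, hABi, h42', hu, hv] at hh
    omega
  have hsplit := Finset.card_filter_add_card_filter_not
    (s := F) (p := fun γ => u ∈ γ ∨ v ∈ γ)
  have heq : (F.filter fun γ => ¬(u ∈ γ ∨ v ∈ γ))
      = M.filter fun γ => γ.card = 7 ∧ ({u, v} : Finset (Fin 12)) ∩ γ = ∅ := by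
    rw [hF, Finset.filter_filter]
    apply Finset.filter_congr
    intro γ _
    have hiff : ({u, v} : Finset (Fin 12)) ∩ γ = ∅ ↔ u ∉ γ ∧ v ∉ γ := by
      simp [Finset.eq_empty_iff_forall_notMem]
    rw [hiff]
    tauto
  rw [← heq]
  omega

lemma aux18_sdiff_lk (hM : IsWPM 6 M) (hecard : e.card = 2)
    {δ : Finset (Fin 12)} (hδM : δ ∈ M) (h7 : δ.card = 7) (heδ : e ⊆ δ) :
    δ \ e ∈ lk M e ∧ (δ \ e).card = 5 ∧ e ∪ δ \ e = δ := by
  have hde : e ∪ δ \ e = δ := Finset.union_sdiff_of_subset heδ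
  have hcd : (δ \ e).card = 5 := by rw [Finset.card_sdiff_of_subset heδ]; omega
  have hne : (δ \ e).Nonempty := Finset.card_pos.mp (by omega)
  have hmem : δ \ e ∈ M := hM.1.2 δ hδM _ Finset.sdiff_subset hne
  have hdd : e ∩ (δ \ e) = ∅ :=
    Finset.disjoint_iff_inter_eq_empty.mp Finset.disjoint_sdiff
  exact ⟨aux18_mem_lk.mpr ⟨hmem, hdd, by rwa [hde]⟩, hcd, hde⟩

lemma aux18_f5 (hM : IsWPM 6 M)
    (hedge : ∀ e ∈ M, e.card = 2 → (M.filter fun γ => γ.card = 7 ∧ e ⊆ γ).card = 42)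
    (he : e ∈ M) (hecard : e.card = 2) :
    ((lk M e).filter fun s => s.card = 5).card = 42 := by
  classical
  rw [← hedge e he hecard]
  apply Finset.card_nbij (fun τ => e ∪ τ)
  · intro τ hτ
    rw [Finset.mem_coe, Finset.mem_filter, aux18_mem_lk] at hτ
    obtain ⟨⟨hτM, hd, hu⟩, h5⟩ := hτ
    rw [Finset.mem_coe, Finset.mem_filter]
    refine ⟨hu, ?_, Finset.subset_union_left⟩
    rw [Finset.card_union_of_disjoint (Finset.disjoint_iff_inter_eq_empty.mpr hd)]
    omega
  · intro τ1 h1 τ2 h2 hEq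
    rw [Finset.mem_coe, Finset.mem_filter, aux18_mem_lk] at h1 h2
    have d1 : Disjoint e τ1 := Finset.disjoint_iff_inter_eq_empty.mpr h1.1.2.1
    have d2 : Disjoint e τ2 := Finset.disjoint_iff_inter_eq_empty.mpr h2.1.2.1
    calc τ1 = (e ∪ τ1) \ e := (Finset.union_sdiff_cancel_left d1).symm
      _ = (e ∪ τ2) \ e := by rw [show e ∪ τ1 = e ∪ τ2 from hEq]
      _ = τ2 := Finset.union_sdiff_cancel_left d2
  · intro δ hδ
    rw [Finset.mem_coe, Finset.mem_filter] at hδ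
    obtain ⟨hδM, h7, heδ⟩ := hδ
    obtain ⟨hlk, hc5, hde⟩ := aux18_sdiff_lk hM hecard hδM h7 heδ
    exact ⟨δ \ e, Finset.mem_coe.mpr (Finset.mem_filter.mpr ⟨hlk, hc5⟩), hde⟩

lemma aux18_ridge (hM : IsWPM 6 M) (hecard : e.card = 2)
    {σ : Finset (Fin 12)} (hσ : σ ∈ lk M e) (hσ4 : σ.card = 4) :
    ((lk M e).filter fun γ => γ.card = 5 ∧ σ ⊆ γ).card = 2 := by
  classical
  rw [aux18_mem_lk] at hσ
  obtain ⟨hσM, hd, hu⟩ := hσ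
  have h6 : (e ∪ σ).card = 6 := by
    rw [Finset.card_union_of_disjoint (Finset.disjoint_iff_inter_eq_empty.mpr hd)]
    omega
  rw [← hM.2.2.2 (e ∪ σ) hu h6]
  apply Finset.card_nbij (fun γ => e ∪ γ)
  · intro γ hγ
    rw [Finset.mem_coe, Finset.mem_filter] at hγ
    obtain ⟨hγlk, h5, hs⟩ := hγ
    rw [aux18_mem_lk] at hγlk
    obtain ⟨hγM, hdγ, huγ⟩ := hγlk
    rw [Finset.mem_coe, Finset.mem_filter]
    refine ⟨huγ, ?_, Finset.union_subset Finset.subset_union_left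
      (hs.trans Finset.subset_union_right)⟩
    rw [Finset.card_union_of_disjoint (Finset.disjoint_iff_inter_eq_empty.mpr hdγ)]
    omega
  · intro γ1 h1 γ2 h2 hEq
    rw [Finset.mem_coe, Finset.mem_filter, aux18_mem_lk] at h1 h2
    have d1 : Disjoint e γ1 := Finset.disjoint_iff_inter_eq_empty.mpr h1.1.2.1
    have d2 : Disjoint e γ2 := Finset.disjoint_iff_inter_eq_empty.mpr h2.1.2.1
    calc γ1 = (e ∪ γ1) \ e := (Finset.union_sdiff_cancel_left d1).symm
      _ = (e ∪ γ2) \ e := by rw [show e ∪ γ1 = e ∪ γ2 from hEq]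
      _ = γ2 := Finset.union_sdiff_cancel_left d2
  · intro δ hδ
    rw [Finset.mem_coe, Finset.mem_filter] at hδ
    obtain ⟨hδM, h7, hsub⟩ := hδ
    have heδ : e ⊆ δ := Finset.subset_union_left.trans hsub
    obtain ⟨hlk, hc5, hde⟩ := aux18_sdiff_lk hM hecard hδM h7 heδ
    have hσsub : σ ⊆ δ \ e := Finset.subset_sdiff.mpr
      ⟨Finset.subset_union_right.trans hsub,
        (Finset.disjoint_iff_inter_eq_empty.mpr hd).symm⟩
    exact ⟨δ \ e, Finset.mem_coe.mpr (Finset.mem_filter.mpr ⟨hlk, hc5, hσsub⟩), hde⟩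

lemma aux18_f3count (hM : IsWPM 6 M) (hcomp : Complementarity M)
    (hedge : ∀ e ∈ M, e.card = 2 → (M.filter fun γ => γ.card = 7 ∧ e ⊆ γ).card = 42)
    (hvx : ∀ v : Fin 12, (M.filter fun γ => γ.card = 7 ∧ v ∈ γ).card = 77)
    (he : e ∈ M) (hecard : e.card = 2) :
    ((lk M e).filter fun s => s.card = 3).card = 100 := by
  classical
  have heNe : e.Nonempty := Finset.card_pos.mp (by omega)
  have hec : eᶜ.card = 10 := by
    rw [Finset.card_compl, Fintype.card_fin, hecard]
  set T := eᶜ.powersetCard 3 with hT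
  have hTc : T.card = 120 := by
    rw [hT, Finset.card_powersetCard, hec]
    decide
  have hset : ((lk M e).filter fun s => s.card = 3) = T.filter fun τ => e ∪ τ ∈ M := by
    ext τ
    simp only [Finset.mem_filter, aux18_mem_lk, hT, Finset.mem_powersetCard]
    constructor
    · rintro ⟨⟨hτM, hd, hu⟩, h3⟩
      exact ⟨⟨aux18_subset_compl.mpr hd, h3⟩, hu⟩
    · rintro ⟨⟨hsub, h3⟩, hu⟩
      have hd := aux18_subset_compl.mp hsub
      refine ⟨⟨aux18_neigh hM hcomp (Finset.card_pos.mp (by omega)) (by omega), hd, hu⟩, h3⟩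
  have hbad : (T.filter fun τ => ¬ (e ∪ τ ∈ M)).card = 20 := by
    rw [← aux18_disj20 hM hedge hvx he hecard]
    apply Finset.card_nbij (fun τ => eᶜ \ τ)
    · intro τ hτ
      rw [Finset.mem_coe, Finset.mem_filter, hT, Finset.mem_powersetCard] at hτ
      obtain ⟨⟨hsub, h3⟩, hnu⟩ := hτ
      have hcompl : (e ∪ τ)ᶜ = eᶜ \ τ := aux18_compl_union
      have hne : (e ∪ τ).Nonempty := heNe.mono Finset.subset_union_left
      have huc : (e ∪ τ).card = 5 := by
        rw [Finset.card_union_of_disjoint (Finset.disjoint_iff_inter_eq_empty.mpr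
          (aux18_subset_compl.mp hsub))]
        omega
      have hnec : (e ∪ τ)ᶜ.Nonempty := by
        rw [← Finset.card_pos, Finset.card_compl, Fintype.card_fin, huc]
        omega
      have hmem : eᶜ \ τ ∈ M := by
        by_contra hcon
        exact hnu ((hcomp _ hne hnec).mpr (by rwa [hcompl]))
      rw [Finset.mem_coe, Finset.mem_filter]
      refine ⟨hmem, ?_, ?_⟩
      · rw [Finset.card_sdiff_of_subset hsub, hec, h3]
      · exact aux18_subset_compl.mp Finset.sdiff_subset
    · intro τ1 h1 τ2 h2 hEq
      rw [Finset.mem_coe, Finset.mem_filter, hT, Finset.mem_powersetCard] at h1 h2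
      have := congrArg (fun s => eᶜ \ s) hEq
      simpa [Finset.sdiff_sdiff_eq_self h1.1.1, Finset.sdiff_sdiff_eq_self h2.1.1]
        using this
    · intro γ hγ
      rw [Finset.mem_coe, Finset.mem_filter] at hγ
      obtain ⟨hγM, h7, hdγ⟩ := hγ
      have hγsub : γ ⊆ eᶜ := aux18_subset_compl.mpr hdγ
      have hback : eᶜ \ (eᶜ \ γ) = γ := Finset.sdiff_sdiff_eq_self hγsub
      have hτsub : eᶜ \ γ ⊆ eᶜ := Finset.sdiff_subset
      have hτ3 : (eᶜ \ γ).card = 3 := by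
        rw [Finset.card_sdiff_of_subset hγsub, hec, h7]
      have hnu : ¬ (e ∪ (eᶜ \ γ) ∈ M) := by
        intro hcon
        have hne : (e ∪ (eᶜ \ γ)).Nonempty := heNe.mono Finset.subset_union_left
        have hcompl : (e ∪ (eᶜ \ γ))ᶜ = γ := by
          rw [aux18_compl_union, hback]
        have hnec : (e ∪ (eᶜ \ γ))ᶜ.Nonempty := by
          rw [hcompl, ← Finset.card_pos]; omega
        exact (hcomp _ hne hnec).mp hcon (by rwa [hcompl])
      refine ⟨eᶜ \ γ, ?_, hback⟩
      rw [Finset.mem_coe, Finset.mem_filter, hT, Finset.mem_powersetCard]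
      exact ⟨⟨hτsub, hτ3⟩, hnu⟩
  have hsplit := Finset.card_filter_add_card_filter_not
    (s := T) (p := fun τ => e ∪ τ ∈ M)
  rw [hset]
  omega

lemma aux18_f4count (hM : IsWPM 6 M) (hcomp : Complementarity M)
    (hedge : ∀ e ∈ M, e.card = 2 → (M.filter fun γ => γ.card = 7 ∧ e ⊆ γ).card = 42)
    (he : e ∈ M) (hecard : e.card = 2) :
    ((lk M e).filter fun s => s.card = 4).card = 105 := by
  classical
  have heNe : e.Nonempty := Finset.card_pos.mp (by omega)
  set S := (lk M e).filter fun s => s.card = 4 with hS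
  set F := M.filter fun γ => γ.card = 7 ∧ e ⊆ γ with hF
  have hFc : F.card = 42 := hedge e he hecard
  have h1 : ∀ τ ∈ S, (F.filter fun γ => τ ⊆ γ).card = 2 := by
    intro τ hτ
    rw [hS, Finset.mem_filter, aux18_mem_lk] at hτ
    obtain ⟨⟨hτM, hd, hu⟩, h4⟩ := hτ
    have h6 : (e ∪ τ).card = 6 := by
      rw [Finset.card_union_of_disjoint (Finset.disjoint_iff_inter_eq_empty.mpr hd)]
      omega
    rw [← hM.2.2.2 (e ∪ τ) hu h6, hF, Finset.filter_filter]
    congr 1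
    apply Finset.filter_congr
    intro γ _
    rw [Finset.union_subset_iff]
    constructor
    · rintro ⟨⟨h7, hea⟩, hta⟩
      exact ⟨by omega, hea, hta⟩
    · rintro ⟨h7, hea, hta⟩
      exact ⟨⟨by omega, hea⟩, hta⟩
  have h2 : ∀ γ ∈ F, (S.filter fun τ => τ ⊆ γ).card = 5 := by
    intro γ hγ
    rw [hF, Finset.mem_filter] at hγ
    obtain ⟨hγM, h7, heγ⟩ := hγ
    have hγe : (γ \ e).card = 5 := by rw [Finset.card_sdiff_of_subset heγ]; omega
    have hst : S.filter (fun τ => τ ⊆ γ) = (γ \ e).powersetCard 4 := by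
      ext τ
      simp only [hS, Finset.mem_filter, aux18_mem_lk, Finset.mem_powersetCard,
        Finset.subset_sdiff]
      constructor
      · rintro ⟨⟨⟨hτM, hd, hu⟩, h4⟩, hsub⟩
        exact ⟨⟨hsub, (Finset.disjoint_iff_inter_eq_empty.mpr hd).symm⟩, h4⟩
      · rintro ⟨⟨hsub, hdis⟩, h4⟩
        have hd : e ∩ τ = ∅ := Finset.disjoint_iff_inter_eq_empty.mp hdis.symm
        have hτM : τ ∈ M := aux18_neigh hM hcomp (Finset.card_pos.mp (by omega)) (by omega)
        have hu : e ∪ τ ∈ M := hM.1.2 γ hγM (e ∪ τ) (Finset.union_subset heγ hsub)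
          (heNe.mono Finset.subset_union_left)
        exact ⟨⟨⟨hτM, hd, hu⟩, h4⟩, hsub⟩
    rw [hst, Finset.card_powersetCard, hγe]
    decide
  have hdc : ∑ τ ∈ S, (F.filter fun γ => τ ⊆ γ).card
      = ∑ γ ∈ F, (S.filter fun τ => τ ⊆ γ).card := by
    simp only [Finset.card_filter]
    exact Finset.sum_comm
  rw [Finset.sum_congr rfl h1, Finset.sum_congr rfl h2, Finset.sum_const,
    Finset.sum_const, hFc, smul_eq_mul, smul_eq_mul] at hdc
  omega

end AuxStmt18

/-- Lemma 4.13, combinatorial part: in a 12-vertex 6-dimensional weak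
pseudomanifold `M` with complementarity, in which every edge lies in exactly 42
facets and every vertex in exactly 77 facets, the link `L` of any edge is a
10-vertex 2-neighbourly 4-dimensional weak pseudomanifold with f-vector
`(10, 45, 100, 105, 42)` and Euler characteristic 2. -/
theorem stmt_18 (M : Finset (Finset (Fin 12))) (hM : IsWPM 6 M)
    (hvert : ∀ v : Fin 12, ({v} : Finset (Fin 12)) ∈ M)
    (hcomp : Complementarity M)
    (hedge : ∀ e ∈ M, e.card = 2 → (M.filter fun γ => γ.card = 7 ∧ e ⊆ γ).card = 42)
    (hvx : ∀ v : Fin 12, (M.filter fun γ => γ.card = 7 ∧ v ∈ γ).card = 77)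
    (e : Finset (Fin 12)) (he : e ∈ M) (hecard : e.card = 2) :
    IsWPM 4 (lk M e) ∧
    (vertSet (lk M e)).card = 10 ∧
    (∀ u ∈ vertSet (lk M e), ∀ v ∈ vertSet (lk M e), u ≠ v →
      ({u, v} : Finset (Fin 12)) ∈ lk M e) ∧
    ((lk M e).filter fun s => s.card = 1).card = 10 ∧
    ((lk M e).filter fun s => s.card = 2).card = 45 ∧
    ((lk M e).filter fun s => s.card = 3).card = 100 ∧
    ((lk M e).filter fun s => s.card = 4).card = 105 ∧
    ((lk M e).filter fun s => s.card = 5).card = 42 ∧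
    eulerChar (lk M e) = 2 := by
  classical
  have heNe : e.Nonempty := Finset.card_pos.mp (by omega)
  have hec : eᶜ.card = 10 := by rw [Finset.card_compl, Fintype.card_fin, hecard]
  have hvs : vertSet (lk M e) = eᶜ := by
    ext v
    simp only [vertSet, Finset.mem_filter, Finset.mem_univ, true_and, aux18_mem_lk,
      Finset.mem_compl]
    constructor
    · rintro ⟨-, hd, -⟩
      intro hv
      exact Finset.eq_empty_iff_forall_notMem.mp hd v
        (Finset.mem_inter.mpr ⟨hv, Finset.mem_singleton_self v⟩)
    · intro hv
      have hd : e ∩ {v} = ∅ := aux18_subset_compl.mp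
        (Finset.singleton_subset_iff.mpr (Finset.mem_compl.mpr hv))
      refine ⟨hvert v, hd, aux18_neigh hM hcomp (heNe.mono Finset.subset_union_left) ?_⟩
      have h1 := Finset.card_union_le e ({v} : Finset (Fin 12))
      rw [Finset.card_singleton] at h1
      omega
  have hk12 : ∀ k : ℕ, 1 ≤ k → k ≤ 2 →
      ((lk M e).filter fun s => s.card = k) = eᶜ.powersetCard k := by
    intro k hk1 hk2
    ext τ
    simp only [Finset.mem_filter, aux18_mem_lk, Finset.mem_powersetCard]
    constructor
    · rintro ⟨⟨hτM, hd, hu⟩, hc⟩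
      exact ⟨aux18_subset_compl.mpr hd, hc⟩
    · rintro ⟨hsub, hc⟩
      have hd := aux18_subset_compl.mp hsub
      have hne : τ.Nonempty := Finset.card_pos.mp (by omega)
      have hub := Finset.card_union_le e τ
      exact ⟨⟨aux18_neigh hM hcomp hne (by omega), hd,
        aux18_neigh hM hcomp (heNe.mono Finset.subset_union_left) (by omega)⟩, hc⟩
  have h10 : ((lk M e).filter fun s => s.card = 1).card = 10 := by
    rw [hk12 1 (by norm_num) (by norm_num), Finset.card_powersetCard, hec]
    decide
  have h45 : ((lk M e).filter fun s => s.card = 2).card = 45 := by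
    rw [hk12 2 (by norm_num) (by norm_num), Finset.card_powersetCard, hec]
    decide
  have h100 := aux18_f3count hM hcomp hedge hvx he hecard
  have h105 := aux18_f4count hM hcomp hedge he hecard
  have h42 := aux18_f5 hM hedge he hecard
  have hwpm : IsWPM 4 (lk M e) := by
    refine ⟨⟨fun σ hσ => hM.1.1 σ (aux18_mem_lk.mp hσ).1, ?_⟩, ⟨?_, ?_⟩, ?_, ?_⟩
    · intro σ hσ τ hτσ hτne
      rw [aux18_mem_lk] at hσ ⊢
      obtain ⟨hσM, hd, hu⟩ := hσ
      refine ⟨hM.1.2 σ hσM τ hτσ hτne, ?_, hM.1.2 (e ∪ σ) hu (e ∪ τ)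
        (Finset.union_subset_union_right hτσ) (heNe.mono Finset.subset_union_left)⟩
      have hsub2 : e ∩ τ ⊆ e ∩ σ := Finset.inter_subset_inter (Finset.Subset.refl e) hτσ
      rw [hd] at hsub2
      exact Finset.subset_empty.mp hsub2
    · intro σ hσ
      rw [aux18_mem_lk] at hσ
      obtain ⟨hσM, hd, hu⟩ := hσ
      have h7 := hM.2.1.1 _ hu
      have := Finset.card_union_of_disjoint (Finset.disjoint_iff_inter_eq_empty.mpr hd)
      omega
    · intro σ hσ
      rw [aux18_mem_lk] at hσ
      obtain ⟨hσM, hd, hu⟩ := hσ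
      obtain ⟨γ, hγM, hsubγ, h7⟩ := hM.2.1.2 (e ∪ σ) hu
      have heγ : e ⊆ γ := Finset.subset_union_left.trans hsubγ
      obtain ⟨hlk, hc5, hde⟩ := aux18_sdiff_lk hM hecard hγM h7 heγ
      refine ⟨γ \ e, hlk, ?_, hc5⟩
      exact Finset.subset_sdiff.mpr ⟨Finset.subset_union_right.trans hsubγ,
        (Finset.disjoint_iff_inter_eq_empty.mpr hd).symm⟩
    · obtain ⟨γ, hγM, heγ, h7⟩ := hM.2.1.2 e he
      obtain ⟨hlk, hc5, -⟩ := aux18_sdiff_lk hM hecard hγM h7 heγ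
      exact ⟨γ \ e, hlk, hc5⟩
    · intro σ hσ hσ4
      exact aux18_ridge hM hecard hσ hσ4
  have hnb : ∀ u ∈ vertSet (lk M e), ∀ v ∈ vertSet (lk M e), u ≠ v →
      ({u, v} : Finset (Fin 12)) ∈ lk M e := by
    intro u hu v hv huv
    rw [hvs, Finset.mem_compl] at hu hv
    have hsub : ({u, v} : Finset (Fin 12)) ⊆ eᶜ := by
      intro x hx
      rw [Finset.mem_insert, Finset.mem_singleton] at hx
      rcases hx with rfl | rfl <;> rw [Finset.mem_compl] <;> assumption
    have hc2 : ({u, v} : Finset (Fin 12)).card = 2 := Finset.card_pair huv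
    have hmem : ({u, v} : Finset (Fin 12)) ∈ eᶜ.powersetCard 2 :=
      Finset.mem_powersetCard.mpr ⟨hsub, hc2⟩
    rw [← hk12 2 (by norm_num) (by norm_num)] at hmem
    exact (Finset.mem_filter.mp hmem).1
  have hvsc : (vertSet (lk M e)).card = 10 := by rw [hvs, hec]
  have hbound : ∀ σ ∈ lk M e, σ.card ∈ Finset.range 6 := by
    intro σ hσ
    have h5 := hwpm.2.1.1 σ hσ
    exact Finset.mem_range.mpr (by omega)
  have heuler : eulerChar (lk M e) = 2 := by
    rw [eulerChar, ← Finset.sum_fiberwise_of_maps_to hbound (fun σ => (-1 : ℤ) ^ (σ.card - 1))]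
    have h0 : ((lk M e).filter fun σ => σ.card = 0).card = 0 := by
      rw [Finset.card_eq_zero, Finset.filter_eq_empty_iff]
      intro σ hσ
      have h := hM.1.1 σ (aux18_mem_lk.mp hσ).1
      have := Finset.card_pos.mpr h
      omega
    have hin : ∀ k : ℕ, (∑ σ ∈ (lk M e).filter (fun σ => σ.card = k), (-1 : ℤ) ^ (σ.card - 1))
        = ((lk M e).filter (fun σ => σ.card = k)).card * (-1 : ℤ) ^ (k - 1) := by
      intro k
      rw [Finset.sum_congr rfl (fun σ hσ => by rw [(Finset.mem_filter.mp hσ).2]),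
        Finset.sum_const, nsmul_eq_mul]
    rw [Finset.sum_range_succ, Finset.sum_range_succ, Finset.sum_range_succ,
      Finset.sum_range_succ, Finset.sum_range_succ, Finset.sum_range_one]
    rw [hin 0, hin 1, hin 2, hin 3, hin 4, hin 5, h0, h10, h45, h100, h105, h42]
    norm_num
  exact ⟨hwpm, hvsc, hnb, h10, h45, h100, h105, h42, heuler⟩
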